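/- For every natural number x ≥ 1 and every k ≥ 1, if 3^{m_k(x)} ≥ 2^k then T^k(x) ≥ x. In particular, if 3^{m_j(x)} > 2^j holds for all j with 1 ≤ j ≤ k, then the stopping time of x is greater than k. -/

import Mathlib

/-- The 3x+1 map: `T x = x/2` if `x` is even, `(3x+1)/2` if `x` is odd. -/
def T (x : ℕ) : ℕ := if x % 2 = 0 then x / 2 else (3 * x + 1) / 2

/-- `m k x` is the number of indices `s` with `0 ≤ s < k` such that `T^[s] x` is odd. -/
def m (k x : ℕ) : ℕ := ((Finset.range k).filter (fun s => T^[s] x % 2 = 1)).card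

lemma key (x : ℕ) : ∀ k, 3 ^ m k x * x ≤ 2 ^ k * T^[k] x := by
  intro k
  induction k with
  | zero => simp [m]
  | succ k ih =>
    set y := T^[k] x with hy
    have hit : T^[k+1] x = T y := by rw [Function.iterate_succ_apply']
    by_cases h : y % 2 = 0
    · have hm : m (k+1) x = m k x := by
        simp [m, Finset.range_add_one, Finset.filter_insert, ← hy, h]
      have hTy : 2 * T y = y := by
        simp only [T, if_pos h]
        omega
      calc 3 ^ m (k+1) x * x = 3 ^ m k x * x := by rw [hm]
        _ ≤ 2 ^ k * y := ih
        _ = 2 ^ (k+1) * T y := by rw [pow_succ]; rw [mul_assoc, hTy]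
        _ = 2 ^ (k+1) * T^[k+1] x := by rw [hit]
    · have h1 : y % 2 = 1 := by omega
      have hm : m (k+1) x = m k x + 1 := by
        simp [m, Finset.range_add_one, Finset.filter_insert, ← hy, h1]
      have hTy : 2 * T y = 3 * y + 1 := by
        simp only [T, if_neg h]
        omega
      calc 3 ^ m (k+1) x * x = 3 * (3 ^ m k x * x) := by rw [hm, pow_succ]; ring
        _ ≤ 3 * (2 ^ k * y) := by exact Nat.mul_le_mul_left 3 ih
        _ ≤ 2 ^ k * (3 * y + 1) := by nlinarith [Nat.pow_pos (n := k) (by norm_num : 0 < 2)]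
        _ = 2 ^ (k+1) * T y := by rw [pow_succ, mul_assoc, hTy]
        _ = 2 ^ (k+1) * T^[k+1] x := by rw [hit]

theorem stmt6 (x k : ℕ) (hx : 1 ≤ x) (hk : 1 ≤ k) :
    (2 ^ k ≤ 3 ^ m k x → x ≤ T^[k] x) ∧
    ((∀ j : ℕ, 1 ≤ j → j ≤ k → 2 ^ j < 3 ^ m j x) →
      ∀ s : ℕ, 1 ≤ s → T^[s] x < x → k < s) := by
  have main : ∀ j, 2 ^ j ≤ 3 ^ m j x → x ≤ T^[j] x := by
    intro j hj
    have h1 := key x j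
    have h2 : 2 ^ j * x ≤ 2 ^ j * T^[j] x :=
      le_trans (Nat.mul_le_mul_right x hj) h1
    exact Nat.le_of_mul_le_mul_left h2 (Nat.pow_pos (n := j) (by norm_num))
  refine ⟨main k, fun hall s hs hlt => ?_⟩
  by_contra hle
  push_neg at hle
  exact absurd (main s (le_of_lt (hall s hs hle))) (not_le.mpr hlt)
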